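/- (Main result, precise form.) Let J ∈ ℝ^{N×p} have rank r and coherence μ(J), let s⋆ ∈ ℝ^N have exactly k nonzero entries with k²r < N/(4μ(J)), set y = Jθ⋆ + s⋆ where θ⋆ = VΣ⁻¹Uᵀ(y − s⋆) for the compact SVD J = UΣVᵀ. Then there exists λ₀ > 0 depending only on (J, θ⋆, k) such that the following holds for every λ > λ₀: with α(γ) = −log γ/(2λ) for γ ∈ (0,1), suppose for each γ there exists ν(γ) ∈ ℝ^N such that, setting θ(γ) = Jᵀν(γ) and s(γ) = γ²exp(4α(γ)ν(γ)) − γ²exp(−4α(γ)ν(γ)) entrywise, one has Jθ(γ) + s(γ) = y, and suppose the limits θ̂ = lim_{γ→0⁺} θ(γ), ŝ = lim_{γ→0⁺} s(γ), ν̂ = lim_{γ→0⁺} ν(γ) exist. Then θ̂ = θ⋆ and ŝ = s⋆. -/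

import Mathlib

open Filter Topology Matrix

private lemma abs_sum_le_card_mul {α : Type*} (s : Finset α) (f : α → ℝ) (c : ℝ)
    (h : ∀ i ∈ s, |f i| ≤ c) : |∑ i ∈ s, f i| ≤ s.card * c := by
  calc |∑ i ∈ s, f i| ≤ ∑ i ∈ s, |f i| := Finset.abs_sum_le_sum_abs _ _
  _ ≤ ∑ _i ∈ s, c := Finset.sum_le_sum h
  _ = s.card * c := by rw [Finset.sum_const, nsmul_eq_mul]

private lemma cert {N r : ℕ} (hN : 0 < N)
    (U : Matrix (Fin N) (Fin r) ℝ) (hU : Uᵀ * U = 1)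
    (S : Finset (Fin N)) (g : ℝ) (hg : 0 ≤ g)
    (hrow : ∀ i, ∑ j, (U i j) ^ 2 ≤ g)
    (hq : (S.card : ℝ) * g < 1/4)
    (b : Fin N → ℝ) (hb0 : ∀ i, i ∉ S → b i = 0)
    (B : ℝ) (hB : ∀ i, |b i| ≤ B) :
    ∃ z : Fin N → ℝ, (∀ t, ∑ i, U i t * z i = 0) ∧
      (∀ i ∈ S, z i = b i) ∧ (∀ i ∉ S, |z i| ≤ B / 3) := by
  have i0 : Fin N := ⟨0, hN⟩
  have hB0 : 0 ≤ B := le_trans (abs_nonneg _) (hB i0)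
  set q : ℝ := (S.card : ℝ) * g with hqdef
  have hq0 : 0 ≤ q := mul_nonneg (Nat.cast_nonneg _) hg
  set G : Fin N → Fin N → ℝ := fun i j => ∑ t, U i t * U j t with hGdef
  have hGg : ∀ i j, |G i j| ≤ g := by
    intro i j
    have h1 : (G i j) ^ 2 ≤ (∑ t, (U i t) ^ 2) * (∑ t, (U j t) ^ 2) :=
      Finset.sum_mul_sq_le_sq_mul_sq _ _ _
    have h2 : (G i j) ^ 2 ≤ g * g := by
      refine h1.trans (mul_le_mul (hrow i) (hrow j) ?_ hg)
      exact Finset.sum_nonneg fun t _ => sq_nonneg _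
    nlinarith [abs_nonneg (G i j), sq_abs (G i j)]
  have key : ∀ t j, ∑ i, U i t * G i j = U j t := by
    intro t j
    have h1 : ∀ u : Fin r, ∑ i, U i t * U i u = (1 : Matrix (Fin r) (Fin r) ℝ) t u := by
      intro u; rw [← hU]; simp [Matrix.mul_apply, Matrix.transpose_apply]
    calc ∑ i, U i t * G i j = ∑ i, ∑ u, U i t * (U i u * U j u) := by
          simp only [hGdef, Finset.mul_sum]
    _ = ∑ u, (∑ i, U i t * U i u) * U j u := by
          rw [Finset.sum_comm]
          refine Finset.sum_congr rfl fun u _ => ?_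
          rw [Finset.sum_mul]
          exact Finset.sum_congr rfl fun i _ => by ring
    _ = U j t := by
          simp only [h1, Matrix.one_apply]
          simp
  set M : Matrix (Fin N) (Fin N) ℝ :=
    Matrix.of (fun i j => (if i = j then (1:ℝ) else 0)
      - if i ∈ S ∧ j ∈ S then G i j else 0) with hMdef
  have hM : ∀ (a : Fin N → ℝ) (i : Fin N),
      M.mulVec a i = a i - (if i ∈ S then ∑ j ∈ S, G i j * a j else 0) := by
    intro a i
    simp only [hMdef, Matrix.mulVec, dotProduct, Matrix.of_apply, sub_mul]
    rw [Finset.sum_sub_distrib]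
    congr 1
    · simp [ite_mul]
    · by_cases hi : i ∈ S
      · simp only [hi, true_and, if_true, ite_mul, zero_mul]
        rw [Finset.sum_ite_mem, Finset.univ_inter]
      · simp [hi]
  -- injectivity of M.mulVecLin
  have hinj : Function.Injective M.mulVecLin := by
    rw [injective_iff_map_eq_zero]
    intro a ha
    have ha' : ∀ i, M.mulVec a i = 0 := fun i => congrFun ha i
    obtain ⟨im, -, hmax⟩ := Finset.exists_max_image Finset.univ (fun i => |a i|)
      ⟨i0, Finset.mem_univ _⟩
    have hmax' : ∀ i, |a i| ≤ |a im| := fun i => hmax i (Finset.mem_univ _)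
    have him : |a im| ≤ 0 := by
      by_cases hi : im ∈ S
      · have h1 := ha' im
        rw [hM a im, if_pos hi, sub_eq_zero] at h1
        have h2 : |a im| ≤ (S.card : ℝ) * (g * |a im|) := by
          calc |a im| = |∑ j ∈ S, G im j * a j| := by rw [h1]
          _ ≤ (S.card : ℝ) * (g * |a im|) := by
              refine abs_sum_le_card_mul _ _ _ fun j _ => ?_
              rw [abs_mul]
              exact mul_le_mul (hGg im j) (hmax' j) (abs_nonneg _) hg
        nlinarith [abs_nonneg (a im)]
      · have h1 := ha' im
        rw [hM a im, if_neg hi, sub_zero] at h1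
        rw [h1]; simp
    have : ∀ i, a i = 0 := fun i => abs_nonpos_iff.mp ((hmax' i).trans him)
    exact funext this
  obtain ⟨a, ha⟩ := (LinearMap.injective_iff_surjective.mp hinj) b
  have ha' : ∀ i, M.mulVec a i = b i := fun i => congrFun ha i
  have haoff : ∀ i, i ∉ S → a i = 0 := by
    intro i hi
    have h1 := ha' i
    rw [hM a i, if_neg hi, sub_zero] at h1
    rw [h1]; exact hb0 i hi
  -- bound on a
  have h1q : (0:ℝ) < 1 - q := by linarith
  have habd : ∀ i, |a i| ≤ B / (1 - q) := by
    obtain ⟨im, -, hmax⟩ := Finset.exists_max_image Finset.univ (fun i => |a i|)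
      ⟨i0, Finset.mem_univ _⟩
    have hmax' : ∀ i, |a i| ≤ |a im| := fun i => hmax i (Finset.mem_univ _)
    have him : |a im| ≤ B / (1 - q) := by
      by_cases hi : im ∈ S
      · have h1 := ha' im
        rw [hM a im, if_pos hi] at h1
        have h2 : a im = b im + ∑ j ∈ S, G im j * a j := by linarith [h1]
        have h3 : |a im| ≤ B + (S.card : ℝ) * (g * |a im|) := by
          calc |a im| = |b im + ∑ j ∈ S, G im j * a j| := by rw [h2]
          _ ≤ |b im| + |∑ j ∈ S, G im j * a j| := abs_add_le _ _
          _ ≤ B + (S.card : ℝ) * (g * |a im|) := by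
              gcongr
              · exact hB im
              refine abs_sum_le_card_mul _ _ _ fun j _ => ?_
              rw [abs_mul]
              exact mul_le_mul (hGg im j) (hmax' j) (abs_nonneg _) hg
        rw [le_div_iff₀ h1q]
        have : (S.card : ℝ) * (g * |a im|) = q * |a im| := by ring
        rw [this] at h3
        nlinarith
      · rw [haoff im hi]
        simp only [abs_zero]
        positivity
    exact fun i => (hmax' i).trans him
  refine ⟨fun i => (if i ∈ S then a i else 0) - ∑ j ∈ S, G i j * a j, ?_, ?_, ?_⟩
  · intro t
    have hsplit : ∑ i, U i t * ((if i ∈ S then a i else 0) - ∑ j ∈ S, G i j * a j)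
        = (∑ i, U i t * (if i ∈ S then a i else 0)) - ∑ i, U i t * ∑ j ∈ S, G i j * a j := by
      rw [← Finset.sum_sub_distrib]
      exact Finset.sum_congr rfl fun i _ => by ring
    rw [hsplit]
    have h1 : ∑ i, U i t * (if i ∈ S then a i else 0) = ∑ i ∈ S, U i t * a i := by
      have : ∀ i, U i t * (if i ∈ S then a i else 0) = if i ∈ S then U i t * a i else 0 := by
        intro i; by_cases hi : i ∈ S <;> simp [hi]
      simp only [this]
      rw [Finset.sum_ite_mem, Finset.univ_inter]
    have h2 : ∑ i, U i t * ∑ j ∈ S, G i j * a j = ∑ j ∈ S, U j t * a j := by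
      calc ∑ i, U i t * ∑ j ∈ S, G i j * a j
          = ∑ i, ∑ j ∈ S, U i t * G i j * a j := by
            refine Finset.sum_congr rfl fun i _ => ?_
            rw [Finset.mul_sum]
            exact Finset.sum_congr rfl fun j _ => by ring
      _ = ∑ j ∈ S, ∑ i, U i t * G i j * a j := Finset.sum_comm
      _ = ∑ j ∈ S, U j t * a j := by
            refine Finset.sum_congr rfl fun j _ => ?_
            rw [← Finset.sum_mul, key]
    rw [h1, h2, sub_self]
  · intro i hi
    have h1 := ha' i
    rw [hM a i, if_pos hi] at h1
    show (if i ∈ S then a i else 0) - ∑ j ∈ S, G i j * a j = b i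
    rw [if_pos hi]
    exact h1
  · intro i hi
    show |(if i ∈ S then a i else 0) - ∑ j ∈ S, G i j * a j| ≤ B / 3
    rw [if_neg hi, zero_sub, abs_neg]
    have h3 : |∑ j ∈ S, G i j * a j| ≤ (S.card : ℝ) * (g * (B / (1 - q))) := by
      refine abs_sum_le_card_mul _ _ _ fun j _ => ?_
      rw [abs_mul]
      exact mul_le_mul (hGg i j) (habd j) (abs_nonneg _) hg
    have h4 : (S.card : ℝ) * (g * (B / (1 - q))) = q * (B / (1 - q)) := by ring
    rw [h4] at h3
    refine h3.trans ?_
    have hD : 0 ≤ B / (1 - q) := div_nonneg hB0 h1q.le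
    have heq : (1 - q) * (B / (1 - q)) = B := by field_simp
    nlinarith [hD, hq0]

private lemma IooNeBot : (nhdsWithin (0:ℝ) (Set.Ioo (0:ℝ) 1)).NeBot := by
  refine mem_closure_iff_nhdsWithin_neBot.mp ?_
  rw [closure_Ioo (by norm_num : (0:ℝ) ≠ 1)]
  exact ⟨le_refl 0, zero_le_one⟩

private lemma logTendsto : Tendsto Real.log (nhdsWithin (0:ℝ) (Set.Ioo (0:ℝ) 1)) atBot :=
  Real.tendsto_log_nhdsGT_zero.mono_left
    (nhdsWithin_mono 0 Set.Ioo_subset_Ioi_self)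

private lemma scalar_facts (lam : ℝ) (hlam : 0 < lam)
    (f q : ℝ → ℝ) (nh sh : ℝ)
    (hf : ∀ γ ∈ Set.Ioo (0:ℝ) 1, q γ =
      Real.exp (2 * Real.log γ * (1 - f γ / lam)) - Real.exp (2 * Real.log γ * (1 + f γ / lam)))
    (hft : Tendsto f (nhdsWithin (0:ℝ) (Set.Ioo (0:ℝ) 1)) (𝓝 nh))
    (hqt : Tendsto q (nhdsWithin (0:ℝ) (Set.Ioo (0:ℝ) 1)) (𝓝 sh)) :
    |nh| ≤ lam ∧ nh * sh = lam * |sh| := by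
  haveI := IooNeBot
  set F := nhdsWithin (0:ℝ) (Set.Ioo (0:ℝ) 1) with hF
  have hmem : ∀ᶠ γ in F, γ ∈ Set.Ioo (0:ℝ) 1 := eventually_mem_nhdsWithin
  have hlog : ∀ᶠ γ in F, Real.log γ < 0 := by
    filter_upwards [hmem] with γ hγ
    exact Real.log_neg hγ.1 hγ.2
  have hexp_to_zero : ∀ c : ℝ, 0 < c →
      Tendsto (fun γ => Real.exp (2 * Real.log γ * c)) F (𝓝 0) := by
    intro c hc
    have h2 : Tendsto (fun γ => (2 * c) * Real.log γ) F atBot :=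
      (tendsto_const_mul_atBot_of_pos (by linarith)).mpr logTendsto
    have h1 : Tendsto (fun γ => 2 * Real.log γ * c) F atBot :=
      h2.congr fun γ => by ring
    exact Real.tendsto_exp_atBot.comp h1
  have hexp_to_top : ∀ c : ℝ, c < 0 →
      Tendsto (fun γ => Real.exp (2 * Real.log γ * c)) F atTop := by
    intro c hc
    have h2 : Tendsto (fun γ => (2 * c) * Real.log γ) F atTop :=
      (tendsto_const_mul_atTop_iff_neg logTendsto).mpr (by linarith)
    have h1 : Tendsto (fun γ => 2 * Real.log γ * c) F atTop :=
      h2.congr fun γ => by ring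
    exact Real.tendsto_exp_atTop.comp h1
  have claim1 : nh ≤ lam := by
    by_contra h
    push_neg at h
    set c := (lam + nh) / 2 with hc
    have hclam : lam < c := by rw [hc]; linarith
    have hfev : ∀ᶠ γ in F, c < f γ := hft.eventually (eventually_gt_nhds (by rw [hc]; linarith))
    have hlb : ∀ᶠ γ in F, Real.exp (2 * Real.log γ * (1 - c / lam)) + (-1) ≤ q γ := by
      filter_upwards [hmem, hlog, hfev] with γ hγ hlg hfγ
      rw [hf γ hγ]
      have hdd : c / lam ≤ f γ / lam := by gcongr
      have e1 : Real.exp (2 * Real.log γ * (1 - c / lam)) ≤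
          Real.exp (2 * Real.log γ * (1 - f γ / lam)) := by
        apply Real.exp_le_exp.mpr
        nlinarith
      have e2 : Real.exp (2 * Real.log γ * (1 + f γ / lam)) ≤ 1 := by
        rw [Real.exp_le_one_iff]
        have hfpos : 0 < f γ := lt_trans (by linarith) hfγ
        have h0 : 0 ≤ f γ / lam := div_nonneg hfpos.le hlam.le
        nlinarith
      linarith
    have htop : Tendsto q F atTop := by
      refine tendsto_atTop_mono' F hlb ?_
      have hcc : 1 - c / lam < 0 := by
        rw [sub_neg, lt_div_iff₀ hlam]; linarith
      exact tendsto_atTop_add_const_right _ (-1) (hexp_to_top _ hcc)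
    exact not_tendsto_atTop_of_tendsto_nhds hqt htop
  have claim2 : -lam ≤ nh := by
    by_contra h
    push_neg at h
    set c := (nh - lam) / 2 with hc
    have hclam : c < -lam := by rw [hc]; linarith
    have hfev : ∀ᶠ γ in F, f γ < c := hft.eventually (eventually_lt_nhds (by rw [hc]; linarith))
    have hub : ∀ᶠ γ in F, q γ ≤ 1 + -Real.exp (2 * Real.log γ * (1 + c / lam)) := by
      filter_upwards [hmem, hlog, hfev] with γ hγ hlg hfγ
      rw [hf γ hγ]
      have hdd : f γ / lam ≤ c / lam := by gcongr
      have e1 : Real.exp (2 * Real.log γ * (1 + c / lam)) ≤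
          Real.exp (2 * Real.log γ * (1 + f γ / lam)) := by
        apply Real.exp_le_exp.mpr
        nlinarith
      have e2 : Real.exp (2 * Real.log γ * (1 - f γ / lam)) ≤ 1 := by
        rw [Real.exp_le_one_iff]
        have hfneg : f γ < 0 := lt_trans hfγ (by linarith)
        have h0 : f γ / lam ≤ 0 := (div_neg_of_neg_of_pos hfneg hlam).le
        nlinarith
      linarith
    have hbot : Tendsto q F atBot := by
      refine tendsto_atBot_mono' F hub ?_
      have hcc : 1 + c / lam < 0 := by
        have : c / lam < -1 := by rw [div_lt_iff₀ hlam]; linarith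
        linarith
      have h3 := tendsto_neg_atTop_atBot.comp (hexp_to_top _ hcc)
      exact tendsto_atBot_add_const_left F 1 h3
    exact not_tendsto_atBot_of_tendsto_nhds hqt hbot
  have claim3 : 0 < sh → nh = lam := by
    intro hsh
    rcases eq_or_lt_of_le claim1 with h | h
    · exact h
    · exfalso
      set c := (nh + lam) / 2 with hc
      have hclam : c < lam := by rw [hc]; linarith
      have hccpos : 0 < 1 - c / lam := by
        rw [sub_pos, div_lt_one hlam]; linarith
      have hfev : ∀ᶠ γ in F, f γ < c := hft.eventually (eventually_lt_nhds (by rw [hc]; linarith))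
      have hub : ∀ᶠ γ in F, q γ ≤ Real.exp (2 * Real.log γ * (1 - c / lam)) := by
        filter_upwards [hmem, hlog, hfev] with γ hγ hlg hfγ
        rw [hf γ hγ]
        have hdd : f γ / lam ≤ c / lam := by gcongr
        have e1 : Real.exp (2 * Real.log γ * (1 - f γ / lam)) ≤
            Real.exp (2 * Real.log γ * (1 - c / lam)) := by
          apply Real.exp_le_exp.mpr
          nlinarith
        have e2 : 0 < Real.exp (2 * Real.log γ * (1 + f γ / lam)) := Real.exp_pos _
        linarith
      have hle : sh ≤ 0 :=
        le_of_tendsto_of_tendsto hqt (hexp_to_zero _ hccpos) hub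
      linarith
  have claim4 : sh < 0 → nh = -lam := by
    intro hsh
    rcases eq_or_lt_of_le claim2 with h | h
    · exact h.symm
    · exfalso
      set c := (nh + -lam) / 2 with hc
      have hclam : -lam < c := by rw [hc]; linarith
      have hccpos : 0 < 1 + c / lam := by
        have : -1 < c / lam := by rw [neg_lt, ← neg_div, div_lt_one hlam]; linarith
        linarith
      have hfev : ∀ᶠ γ in F, c < f γ := hft.eventually (eventually_gt_nhds (by rw [hc]; linarith))
      have hub : ∀ᶠ γ in F, -Real.exp (2 * Real.log γ * (1 + c / lam)) ≤ q γ := by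
        filter_upwards [hmem, hlog, hfev] with γ hγ hlg hfγ
        rw [hf γ hγ]
        have hdd : c / lam ≤ f γ / lam := by gcongr
        have e1 : Real.exp (2 * Real.log γ * (1 + f γ / lam)) ≤
            Real.exp (2 * Real.log γ * (1 + c / lam)) := by
          apply Real.exp_le_exp.mpr
          nlinarith
        have e2 : 0 < Real.exp (2 * Real.log γ * (1 - f γ / lam)) := Real.exp_pos _
        linarith
      have hge : (0:ℝ) ≤ sh := by
        have h0 : Tendsto (fun γ => -Real.exp (2 * Real.log γ * (1 + c / lam))) F (𝓝 (-0)) :=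
          (hexp_to_zero _ hccpos).neg
        rw [neg_zero] at h0
        exact le_of_tendsto_of_tendsto h0 hqt hub
      linarith
  refine ⟨abs_le.mpr ⟨claim2, claim1⟩, ?_⟩
  rcases lt_trichotomy sh 0 with h | h | h
  · rw [claim4 h, abs_of_neg h]; ring
  · rw [h]; simp
  · rw [claim3 h, abs_of_pos h]



set_option maxHeartbeats 800000 in
/-- Main result, precise form: under the compact SVD
`J = UΣVᵀ` of rank `r`, coherence `μ(J)`, `s⋆` with exactly `k` nonzeros,
`k² r < N/(4μ(J))`, `θ⋆ = VΣ⁻¹Uᵀ(y − s⋆)` and `y = Jθ⋆ + s⋆`, there exists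
`λ₀ > 0` (depending only on `(J, θ⋆, k)`) such that for every `λ > λ₀`: with
`α(γ) = −log γ/(2λ)`, if for each `γ ∈ (0,1)` there is `ν(γ)` with
`θ(γ) = Jᵀν(γ)`, `s(γ) = γ²exp(4α(γ)ν(γ)) − γ²exp(−4α(γ)ν(γ))` entrywise and
`Jθ(γ) + s(γ) = y`, and the limits `θ̂, ŝ, ν̂` as `γ → 0⁺` exist, then
`θ̂ = θ⋆` and `ŝ = s⋆`. -/
theorem stmt_15 (N p r : ℕ) (hN : 0 < N) (hr : 0 < r)
    (U : Matrix (Fin N) (Fin r) ℝ) (V : Matrix (Fin p) (Fin r) ℝ) (σ : Fin r → ℝ)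
    (hU : Uᵀ * U = 1) (hV : Vᵀ * V = 1) (hσ : ∀ i, 0 < σ i)
    (J : Matrix (Fin N) (Fin p) ℝ) (hJ : J = U * Matrix.diagonal σ * Vᵀ)
    (y sstar : Fin N → ℝ) (θstar : Fin p → ℝ)
    (hθstar : θstar = (V * Matrix.diagonal (fun i => (σ i)⁻¹) * Uᵀ).mulVec (y - sstar))
    (hy : y = J.mulVec θstar + sstar)
    (k : ℕ) (hsupp : (Finset.univ.filter (fun i => sstar i ≠ 0)).card = k)
    (μ : ℝ) (hμ : μ = ((N : ℝ) / r) * ⨆ i : Fin N, ∑ j, (U i j) ^ 2)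
    (hcond : (k : ℝ) ^ 2 * r < (N : ℝ) / (4 * μ)) :
    ∃ lam0 : ℝ, 0 < lam0 ∧ ∀ lam : ℝ, lam0 < lam →
      ∀ (α : ℝ → ℝ), (∀ γ ∈ Set.Ioo (0 : ℝ) 1, α γ = -Real.log γ / (2 * lam)) →
      ∀ (ν : ℝ → Fin N → ℝ) (θ : ℝ → Fin p → ℝ) (s : ℝ → Fin N → ℝ),
        (∀ γ ∈ Set.Ioo (0 : ℝ) 1, θ γ = J.transpose.mulVec (ν γ)) →
        (∀ γ ∈ Set.Ioo (0 : ℝ) 1, s γ = fun i =>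
          γ ^ 2 * Real.exp (4 * α γ * ν γ i) - γ ^ 2 * Real.exp (-(4 * α γ * ν γ i))) →
        (∀ γ ∈ Set.Ioo (0 : ℝ) 1, J.mulVec (θ γ) + s γ = y) →
      ∀ (θhat : Fin p → ℝ) (shat νhat : Fin N → ℝ),
        Tendsto θ (𝓝[Set.Ioo (0 : ℝ) 1] 0) (𝓝 θhat) →
        Tendsto s (𝓝[Set.Ioo (0 : ℝ) 1] 0) (𝓝 shat) →
        Tendsto ν (𝓝[Set.Ioo (0 : ℝ) 1] 0) (𝓝 νhat) →
        θhat = θstar ∧ shat = sstar := by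

  have hNR : (0:ℝ) < N := Nat.cast_pos.mpr hN
  have hrR : (0:ℝ) < r := Nat.cast_pos.mpr hr
  -- row norm bound
  set csup : ℝ := ⨆ i : Fin N, ∑ j, (U i j) ^ 2 with hcsup
  have hbdd : BddAbove (Set.range fun i : Fin N => ∑ j, (U i j) ^ 2) :=
    Set.Finite.bddAbove (Set.finite_range _)
  have hrowc : ∀ i, ∑ j, (U i j) ^ 2 ≤ csup := fun i => le_ciSup hbdd i
  have htrace : ∑ j : Fin r, ∑ i : Fin N, (U i j)^2 = (r:ℝ) := by
    have h1 : ∀ j : Fin r, ∑ i, (U i j)^2 = (Uᵀ * U) j j := by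
      intro j; simp [Matrix.mul_apply, Matrix.transpose_apply, sq]
    simp [h1, hU, Matrix.one_apply]
  have hcpos : 0 < csup := by
    by_contra hcon
    push_neg at hcon
    have hzero : ∀ i, ∑ j, (U i j)^2 = 0 := by
      intro i
      have h1 : (0:ℝ) ≤ ∑ j, (U i j)^2 := Finset.sum_nonneg fun j _ => sq_nonneg _
      linarith [hrowc i]
    have h2 : ∑ j : Fin r, ∑ i : Fin N, (U i j)^2 = 0 := by
      rw [Finset.sum_comm]; simp [hzero]
    rw [htrace] at h2
    exact absurd h2 (ne_of_gt hrR)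
  have hμpos : 0 < μ := by
    rw [hμ]; exact mul_pos (div_pos hNR hrR) hcpos
  set g : ℝ := μ * r / N with hgdef
  have hgc : g = csup := by
    rw [hgdef, hμ]; field_simp
  have hgpos : 0 < g := hgc ▸ hcpos
  -- pseudoinverse and w0
  set P := V * Matrix.diagonal (fun i => (σ i)⁻¹) * Uᵀ with hP
  set w0 := Pᵀ.mulVec θstar with hw0
  have hNe : (Finset.univ : Finset (Fin N)).Nonempty := ⟨⟨0,hN⟩, Finset.mem_univ _⟩
  set W := Finset.univ.sup' hNe (fun i => |w0 i|) with hW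
  have hWb : ∀ i, |w0 i| ≤ W := fun i => by
    rw [hW]; exact Finset.le_sup' (fun i => |w0 i|) (Finset.mem_univ i)
  have hW0 : 0 ≤ W := le_trans (abs_nonneg _) (hWb ⟨0,hN⟩)
  -- matrix identities
  have hDD : Matrix.diagonal (fun i => (σ i)⁻¹) * Matrix.diagonal σ
      = (1 : Matrix (Fin r) (Fin r) ℝ) := by
    rw [Matrix.diagonal_mul_diagonal]
    have h1 : (fun i => (σ i)⁻¹ * σ i) = fun _ => (1:ℝ) :=
      funext fun i => inv_mul_cancel₀ (hσ i).ne'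
    rw [h1, Matrix.diagonal_one]
  have hPJ : P * J = V * Vᵀ := by
    rw [hP, hJ]
    calc V * Matrix.diagonal (fun i => (σ i)⁻¹) * Uᵀ * (U * Matrix.diagonal σ * Vᵀ)
        = V * (Matrix.diagonal (fun i => (σ i)⁻¹) * ((Uᵀ * U) * (Matrix.diagonal σ * Vᵀ))) := by
          simp only [Matrix.mul_assoc]
    _ = V * ((Matrix.diagonal (fun i => (σ i)⁻¹) * Matrix.diagonal σ) * Vᵀ) := by
          rw [hU, Matrix.one_mul, Matrix.mul_assoc]
    _ = V * Vᵀ := by rw [hDD, Matrix.one_mul]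
  have hysJ : y - sstar = J.mulVec θstar := by rw [hy]; abel
  have hfix : (V * Vᵀ).mulVec θstar = θstar := by
    calc (V * Vᵀ).mulVec θstar = (P * J).mulVec θstar := by rw [hPJ]
    _ = P.mulVec (J.mulVec θstar) := (Matrix.mulVec_mulVec _ _ _).symm
    _ = P.mulVec (y - sstar) := by rw [hysJ]
    _ = θstar := hθstar.symm
  have hJT : Jᵀ = V * Matrix.diagonal σ * Uᵀ := by
    rw [hJ, Matrix.transpose_mul, Matrix.transpose_mul, Matrix.transpose_transpose,
      Matrix.diagonal_transpose, Matrix.mul_assoc]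
  have hJTw0 : Jᵀ.mulVec w0 = θstar := by
    rw [hw0, Matrix.mulVec_mulVec]
    have h1 : Jᵀ * Pᵀ = V * Vᵀ := by
      rw [← Matrix.transpose_mul, hPJ, Matrix.transpose_mul, Matrix.transpose_transpose]
    rw [h1, hfix]
  refine ⟨2*W + 1, by linarith, ?_⟩
  intro lam hlam α hα ν θ s hθdef hsdef heq θhat shat νhat hθt hst hνt
  have hlampos : 0 < lam := by linarith
  haveI := IooNeBot
  set F := nhdsWithin (0:ℝ) (Set.Ioo (0:ℝ) 1) with hFdef
  -- limits
  have hνc : ∀ i, Tendsto (fun γ => ν γ i) F (𝓝 (νhat i)) := fun i => tendsto_pi_nhds.mp hνt i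
  have hsc : ∀ i, Tendsto (fun γ => s γ i) F (𝓝 (shat i)) := fun i => tendsto_pi_nhds.mp hst i
  have hJTν : Tendsto (fun γ => Jᵀ.mulVec (ν γ)) F (𝓝 (Jᵀ.mulVec νhat)) := by
    rw [tendsto_pi_nhds]
    intro j
    have h1 : ∀ v : Fin N → ℝ, Jᵀ.mulVec v j = ∑ i, Jᵀ j i * v i := fun v => rfl
    simp only [h1]
    exact tendsto_finset_sum _ fun i _ => (hνc i).const_mul _
  have hθhat : θhat = Jᵀ.mulVec νhat := by
    refine tendsto_nhds_unique hθt (hJTν.congr' ?_)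
    filter_upwards [eventually_mem_nhdsWithin] with γ hγ
    exact (hθdef γ hγ).symm
  have hJθ : Tendsto (fun γ => J.mulVec (θ γ)) F (𝓝 (J.mulVec θhat)) := by
    rw [tendsto_pi_nhds]
    intro j
    have h1 : ∀ v : Fin p → ℝ, J.mulVec v j = ∑ i, J j i * v i := fun v => rfl
    simp only [h1]
    exact tendsto_finset_sum _ fun i _ => (tendsto_pi_nhds.mp hθt i).const_mul _
  have hyeq : J.mulVec θhat + shat = y := by
    refine tendsto_nhds_unique ((hJθ.add hst).congr' ?_) tendsto_const_nhds
    filter_upwards [eventually_mem_nhdsWithin] with γ hγ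
    exact heq γ hγ
  -- pointwise facts about νhat, shat
  have hfacts : ∀ i, |νhat i| ≤ lam ∧ νhat i * shat i = lam * |shat i| := by
    intro i
    refine scalar_facts lam hlampos (fun γ => ν γ i) (fun γ => s γ i) _ _ ?_ (hνc i) (hsc i)
    intro γ hγ
    show s γ i = _
    have hsγ := congrFun (hsdef γ hγ) i
    rw [hsγ, hα γ hγ]
    have hγpos : (0:ℝ) < γ := hγ.1
    have hexp2 : γ^2 = Real.exp (2 * Real.log γ) := by
      rw [two_mul, Real.exp_add, Real.exp_log hγpos, sq]
    rw [hexp2, ← Real.exp_add, ← Real.exp_add]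
    congr 2 <;> · field_simp; ring
  -- certificate
  set S := Finset.univ.filter (fun i => sstar i ≠ 0) with hSdef
  have hScard : (S.card : ℝ) = (k : ℝ) := by rw [hsupp]
  have hq : (S.card : ℝ) * g < 1/4 := by
    rw [hScard]
    rcases Nat.eq_zero_or_pos k with hk | hk
    · rw [hk]; norm_num
    · have hkR : (1:ℝ) ≤ (k:ℝ) := Nat.one_le_cast.mpr hk
      have h4μ : (0:ℝ) < 4 * μ := by linarith
      have h1 : (k:ℝ)^2 * r * (4*μ) < N := (lt_div_iff₀ h4μ).mp hcond
      rw [hgdef]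
      rw [mul_div_assoc', div_lt_iff₀ hNR]
      nlinarith
  set B := 1 + W / lam with hBdef
  set b : Fin N → ℝ :=
    fun i => if sstar i ≠ 0 then (if 0 < sstar i then 1 else -1) - w0 i / lam else 0 with hbdef
  have hb0 : ∀ i, i ∉ S → b i = 0 := by
    intro i hi
    rw [hSdef, Finset.mem_filter] at hi
    push_neg at hi
    have h1 : sstar i = 0 := hi (Finset.mem_univ i)
    simp [hbdef, h1]
  have hBb : ∀ i, |b i| ≤ B := by
    intro i
    have hWlam : 0 ≤ W / lam := div_nonneg hW0 hlampos.le
    by_cases hi : sstar i ≠ 0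
    · have h1 : b i = (if 0 < sstar i then 1 else -1) - w0 i / lam := by simp [hbdef, hi]
      rw [h1, hBdef]
      refine (abs_sub _ _).trans ?_
      have h2 : |(if 0 < sstar i then (1:ℝ) else -1)| = 1 := by
        by_cases hp : 0 < sstar i <;> simp [hp]
      rw [h2, abs_div, abs_of_pos hlampos]
      gcongr
      exact hWb i
    · have h1 : b i = 0 := by simp [hbdef, hi]
      rw [h1, abs_zero, hBdef]
      linarith
  obtain ⟨z, hz1, hz2, hz3⟩ := cert hN U hU S g hgpos.le
    (fun i => (hrowc i).trans_eq hgc.symm) hq b hb0 B hBb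
  obtain ⟨w, hwabs, hwssum, hJTw⟩ :
      ∃ w : Fin N → ℝ, (∀ i, |w i| ≤ lam) ∧ (∀ i, w i * sstar i = lam * |sstar i|) ∧
        Jᵀ.mulVec w = θstar := by
    refine ⟨fun i => w0 i + lam * z i, ?_, ?_, ?_⟩
    · -- abs bound
      intro i
      by_cases hi : sstar i ≠ 0
      · have hiS : i ∈ S := by rw [hSdef, Finset.mem_filter]; exact ⟨Finset.mem_univ i, hi⟩
        have h1 := hz2 i hiS
        have h2 : b i = (if 0 < sstar i then 1 else -1) - w0 i / lam := by simp [hbdef, hi]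
        have h3 : w0 i + lam * z i = lam * (if 0 < sstar i then 1 else -1) := by
          rw [h1, h2]; field_simp; ring
        show |w0 i + lam * z i| ≤ lam
        rw [h3, abs_mul, abs_of_pos hlampos]
        have h4 : |(if 0 < sstar i then (1:ℝ) else -1)| = 1 := by
          by_cases hp : 0 < sstar i <;> simp [hp]
        rw [h4, mul_one]
      · have hiS : i ∉ S := by
          rw [hSdef, Finset.mem_filter]
          push_neg at hi ⊢
          intro _; exact hi
        have h1 := hz3 i hiS
        show |w0 i + lam * z i| ≤ lam
        have h2 : |w0 i + lam * z i| ≤ |w0 i| + lam * |z i| := by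
          refine (abs_add_le _ _).trans ?_
          rw [abs_mul, abs_of_pos hlampos]
        have h3 : lam * |z i| ≤ lam * (B/3) := by gcongr
        have h4 : lam * (B/3) = (lam + W)/3 := by
          rw [hBdef]; field_simp
        have h5 := hWb i
        rw [h4] at h3
        linarith
    · -- sign condition
      intro i
      by_cases hi : sstar i = 0
      · simp [hi]
      · have hiS : i ∈ S := by rw [hSdef, Finset.mem_filter]; exact ⟨Finset.mem_univ i, hi⟩
        have h1 := hz2 i hiS
        have h2 : b i = (if 0 < sstar i then 1 else -1) - w0 i / lam := by simp [hbdef, hi]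
        have h3 : w0 i + lam * z i = lam * (if 0 < sstar i then 1 else -1) := by
          rw [h1, h2]; field_simp; ring
        show (w0 i + lam * z i) * sstar i = lam * |sstar i|
        rw [h3]
        rcases lt_trichotomy (sstar i) 0 with h|h|h
        · rw [if_neg (by linarith), abs_of_neg h]; ring
        · exact absurd h hi
        · rw [if_pos h, abs_of_pos h]; ring
    · -- range condition
      have hw' : (fun i => w0 i + lam * z i) = w0 + lam • z := by
        funext i; simp
      rw [hw', Matrix.mulVec_add, Matrix.mulVec_smul, hJTw0]
      have hUz : Uᵀ.mulVec z = 0 := by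
        funext t
        have h1 : Uᵀ.mulVec z t = ∑ i, U i t * z i := rfl
        rw [h1, hz1 t]; rfl
      have hJz : Jᵀ.mulVec z = 0 := by
        rw [hJT]
        have h2 : (V * Matrix.diagonal σ * Uᵀ).mulVec z
            = (V * Matrix.diagonal σ).mulVec (Uᵀ.mulVec z) :=
          (Matrix.mulVec_mulVec z (V * Matrix.diagonal σ) Uᵀ).symm
        rw [h2, hUz, Matrix.mulVec_zero]
      rw [hJz, smul_zero, add_zero]
  -- final argument
  have hterm : ∀ i, 0 ≤ (νhat i - w i) * (shat i - sstar i) := by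
    intro i
    obtain ⟨hb1, hb2⟩ := hfacts i
    have h1 : νhat i * sstar i ≤ lam * |sstar i| := by
      calc νhat i * sstar i ≤ |νhat i * sstar i| := le_abs_self _
      _ = |νhat i| * |sstar i| := abs_mul _ _
      _ ≤ lam * |sstar i| := mul_le_mul_of_nonneg_right hb1 (abs_nonneg _)
    have h2 : w i * shat i ≤ lam * |shat i| := by
      calc w i * shat i ≤ |w i * shat i| := le_abs_self _
      _ = |w i| * |shat i| := abs_mul _ _
      _ ≤ lam * |shat i| := mul_le_mul_of_nonneg_right (hwabs i) (abs_nonneg _)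
    have h3 := hwssum i
    have hexp : (νhat i - w i) * (shat i - sstar i)
        = νhat i * shat i - νhat i * sstar i - w i * shat i + w i * sstar i := by ring
    rw [hexp, hb2, h3]
    linarith
  have hssub : shat - sstar = J.mulVec (θstar - θhat) := by
    have h1 : shat = y - J.mulVec θhat := by rw [← hyeq]; abel
    have h2 : sstar = y - J.mulVec θstar := by rw [hy]; abel
    rw [h1, h2, Matrix.mulVec_sub]
    abel
  have hsum1 : 0 ≤ ∑ i, (νhat i - w i) * (shat i - sstar i) :=
    Finset.sum_nonneg fun i _ => hterm i
  have hsum2 : ∑ i, (νhat i - w i) * (shat i - sstar i)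
      = - ∑ j, (θstar j - θhat j)^2 := by
    have hdot : ∑ i, (νhat i - w i) * (shat i - sstar i)
        = (νhat - w) ⬝ᵥ (shat - sstar) := by
      simp [dotProduct, Pi.sub_apply]
    rw [hdot, hssub, Matrix.dotProduct_mulVec, ← Matrix.mulVec_transpose,
      Matrix.mulVec_sub, ← hθhat, hJTw]
    have h1 : ∀ j : Fin p, (θhat j - θstar j) * (θstar j - θhat j)
        = -((θstar j - θhat j)^2) := fun j => by ring
    calc (θhat - θstar) ⬝ᵥ (θstar - θhat)
        = ∑ j, (θhat j - θstar j) * (θstar j - θhat j) := by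
          simp [dotProduct, Pi.sub_apply]
    _ = ∑ j, -((θstar j - θhat j)^2) := Finset.sum_congr rfl fun j _ => h1 j
    _ = - ∑ j, (θstar j - θhat j)^2 := by rw [Finset.sum_neg_distrib]
  have hzero : ∑ j, (θstar j - θhat j)^2 = 0 := by
    have hnn : 0 ≤ ∑ j, (θstar j - θhat j)^2 := Finset.sum_nonneg fun j _ => sq_nonneg _
    rw [hsum2] at hsum1
    linarith
  have hθeq : θhat = θstar := by
    funext j
    have h1 := (Finset.sum_eq_zero_iff_of_nonneg (fun j _ => sq_nonneg _)).mp hzero j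
      (Finset.mem_univ j)
    have h2 : θstar j - θhat j = 0 := by
      have := sq_eq_zero_iff.mp h1
      exact this
    linarith
  refine ⟨hθeq, ?_⟩
  rw [hθeq] at hyeq
  have h2 : J.mulVec θstar + shat = J.mulVec θstar + sstar := by rw [hyeq, hy]
  exact add_left_cancel h2
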